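/- Let S ⊆ ℤ^r × ℕ be a strongly non-negative semigroup and let Γ ⊆ S be a non-trivial semigroup ideal of S (i.e., Γ ≠ ∅ and a + S ⊆ Γ for all a ∈ Γ, with Γ closed under addition with S). Then: (i) Δ(Γ) = Δ(S); (ii) ind(Γ) = ind(S); (iii) m(Γ) = m(S). -/

import Mathlib

/-!
# Statement 16

Let `S ⊆ ℤ^r × ℕ` be a strongly non-negative semigroup and `Γ ⊆ S` a non-trivial semigroup
ideal.  Then `Δ(Γ) = Δ(S)`, `ind(Γ) = ind(S)` and `m(Γ) = m(S)`.

Notation (following Kaveh–Khovanskii): for a semigroup `S ⊆ ℤ^r × ℕ`, with `π` the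
projection to the last coordinate, `G(S)` is the group generated by `S`, `Con(S)` the
closed convex cone generated by `S` in `ℝ^r × ℝ`, `L(S)` its linear span,
`M(S) = L(S) ∩ π⁻¹(ℝ≥0)`, `∂M = L(S) ∩ π⁻¹(0)`, `∂M_ℤ = ∂M ∩ ℤ^(r+1)`,
`m(S) = [ℤ : π(G(S))]`, `ind(S) = [∂M_ℤ : G(S) ∩ ∂M]`, and
`Δ(S) = Con(S) ∩ π⁻¹(m(S))` is the Newton–Okounkov body of `S`.
`S` is strongly non-negative if `Con(S)` is strictly convex and meets `∂M` only at `0`.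
-/

open Filter

namespace NOSemigroup

variable (r : ℕ)

/-- The lattice `ℤ^r × ℤ` containing `ℤ^r × ℕ`. -/
abbrev Z (r : ℕ) := (Fin r → ℤ) × ℤ

/-- The ambient real vector space `ℝ^r × ℝ`. -/
abbrev E (r : ℕ) := (Fin r → ℝ) × ℝ

/-- Inclusion `ℤ^r × ℕ → ℤ^r × ℤ`. -/
def toZ (q : (Fin r → ℤ) × ℕ) : Z r := (q.1, (q.2 : ℤ))

/-- The canonical embedding of the lattice `ℤ^r × ℤ` into `ℝ^r × ℝ`. -/
def latticeEmb : Z r →+ E r where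
  toFun z := (fun i => (z.1 i : ℝ), (z.2 : ℝ))
  map_zero' := by
    refine Prod.ext (funext fun i => ?_) ?_ <;> simp
  map_add' a b := by
    refine Prod.ext (funext fun i => ?_) ?_ <;> simp

/-- The image of a subset of `ℤ^r × ℕ` in `ℝ^r × ℝ`. -/
def embSet (S : Set ((Fin r → ℤ) × ℕ)) : Set (E r) :=
  (fun q => latticeEmb r (toZ r q)) '' S

/-- The closed convex cone generated by a subset `T` of `ℝ^r × ℝ`:  the closure of the set
of all non-negative linear combinations of elements of `T`. -/
def conGen (T : Set (E r)) : Set (E r) :=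
  closure {x | ∃ (n : ℕ) (c : Fin n → ℝ) (v : Fin n → E r),
    (∀ i, 0 ≤ c i) ∧ (∀ i, v i ∈ T) ∧ x = ∑ i, c i • v i}

/-- `Con(S)`, the closed convex cone generated by `S`. -/
def coneOf (S : Set ((Fin r → ℤ) × ℕ)) : Set (E r) :=
  conGen r (embSet r S)

/-- `L(S)`, the linear span of `S` in `ℝ^r × ℝ`. -/
def spanOf (S : Set ((Fin r → ℤ) × ℕ)) : Submodule ℝ (E r) :=
  Submodule.span ℝ (embSet r S)

/-- `G(S)`, the subgroup of `ℤ^r × ℤ` generated by `S`. -/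
def groupOf (S : Set ((Fin r → ℤ) × ℕ)) : AddSubgroup (Z r) :=
  AddSubgroup.closure (toZ r '' S)

/-- `m(S) = [ℤ : π(G(S))]`, the index of the image of `G(S)` under the projection to the
last coordinate. -/
noncomputable def mIndex (S : Set ((Fin r → ℤ) × ℕ)) : ℕ :=
  ((groupOf r S).map (AddMonoidHom.snd (Fin r → ℤ) ℤ)).index

/-- `∂M_ℤ = ∂M ∩ ℤ^(r+1)`: the group of lattice points lying in `L(S)` with vanishing last
coordinate. -/
def boundaryLattice (S : Set ((Fin r → ℤ) × ℕ)) : AddSubgroup (Z r) where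
  carrier := {z | latticeEmb r z ∈ spanOf r S ∧ z.2 = 0}
  zero_mem' := by
    refine ⟨?_, rfl⟩
    rw [map_zero]
    exact (spanOf r S).zero_mem
  add_mem' := by
    rintro a b ⟨ha1, ha2⟩ ⟨hb1, hb2⟩
    refine ⟨?_, by simp [ha2, hb2]⟩
    rw [map_add]
    exact (spanOf r S).add_mem ha1 hb1
  neg_mem' := by
    rintro a ⟨h1, h2⟩
    refine ⟨?_, by simp [h2]⟩
    rw [map_neg]
    exact (spanOf r S).neg_mem h1

/-- `ind(S) = [∂M_ℤ : G(S) ∩ ∂M]`. -/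
noncomputable def indIndex (S : Set ((Fin r → ℤ) × ℕ)) : ℕ :=
  (groupOf r S).relIndex (boundaryLattice r S)

/-- The Newton–Okounkov body `Δ(S) = Con(S) ∩ π⁻¹(m(S))`. -/
noncomputable def okBody (S : Set ((Fin r → ℤ) × ℕ)) : Set (E r) :=
  coneOf r S ∩ {x | x.2 = (mIndex r S : ℝ)}

/-- `S` is non-negative (automatic here) and strongly non-negative:  `Con(S)` is strictly
convex and intersects `∂M = L(S) ∩ π⁻¹(0)` only at the origin. -/
def StronglyNonneg (S : Set ((Fin r → ℤ) × ℕ)) : Prop :=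
  (∀ x ∈ coneOf r S, -x ∈ coneOf r S → x = 0) ∧
  (∀ x ∈ coneOf r S, (x ∈ spanOf r S ∧ x.2 = 0) → x = 0)

end NOSemigroup

open NOSemigroup

namespace Stmt16Aux

open NOSemigroup Filter

lemma toZ_add (r : ℕ) (a b : (Fin r → ℤ) × ℕ) : NOSemigroup.toZ r (a + b) = NOSemigroup.toZ r a + NOSemigroup.toZ r b := by
  unfold NOSemigroup.toZ
  refine Prod.ext rfl ?_
  push_cast
  rfl

lemma toZ_zero (r : ℕ) : NOSemigroup.toZ r (0 : (Fin r → ℤ) × ℕ) = 0 := by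
  unfold NOSemigroup.toZ
  refine Prod.ext rfl ?_
  rfl

noncomputable def embHom (r : ℕ) : (Fin r → ℤ) × ℕ →+ E r where
  toFun q := latticeEmb r (NOSemigroup.toZ r q)
  map_zero' := by show latticeEmb r (NOSemigroup.toZ r 0) = 0; rw [toZ_zero, map_zero]
  map_add' a b := by
    show latticeEmb r (NOSemigroup.toZ r (a + b)) = latticeEmb r (NOSemigroup.toZ r a) + latticeEmb r (NOSemigroup.toZ r b)
    rw [toZ_add, map_add]

lemma embHom_apply (r : ℕ) (q : (Fin r → ℤ) × ℕ) :
    embHom r q = latticeEmb r (NOSemigroup.toZ r q) := rfl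

lemma nsmul_mem_semigroup {r : ℕ} {S : Set ((Fin r → ℤ) × ℕ)}
    (hS : ∀ a ∈ S, ∀ b ∈ S, a + b ∈ S) {s : (Fin r → ℤ) × ℕ} (hs : s ∈ S) :
    ∀ n : ℕ, 0 < n → n • s ∈ S := by
  intro n hn
  induction n with
  | zero => omega
  | succ k ih =>
    rcases Nat.eq_zero_or_pos k with hk | hk
    · subst hk; simpa using hs
    · rw [succ_nsmul]
      exact hS _ (ih hk) _ hs

end Stmt16Aux

/-- Let `S ⊆ ℤ^r × ℕ` be a strongly non-negative semigroup and let
`Γ ⊆ S` be a non-trivial semigroup ideal (`Γ ≠ ∅` and `a + S ⊆ Γ` for all `a ∈ Γ`).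
Then (i) `Δ(Γ) = Δ(S)`; (ii) `ind(Γ) = ind(S)`; (iii) `m(Γ) = m(S)`. -/
theorem stmt16 (r : ℕ) (S Γ : Set ((Fin r → ℤ) × ℕ))
    (hS : ∀ a ∈ S, ∀ b ∈ S, a + b ∈ S)
    (hSnn : StronglyNonneg r S)
    (hΓS : Γ ⊆ S) (hΓne : Γ.Nonempty)
    (hIdeal : ∀ a ∈ Γ, ∀ s ∈ S, a + s ∈ Γ) :
    okBody r Γ = okBody r S ∧ indIndex r Γ = indIndex r S ∧ mIndex r Γ = mIndex r S := by
  classical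
  obtain ⟨γ₀, hγ₀⟩ := hΓne
  have hG : groupOf r Γ = groupOf r S := by
    refine le_antisymm (AddSubgroup.closure_mono (Set.image_mono hΓS)) ?_
    rw [groupOf, AddSubgroup.closure_le]
    rintro _ ⟨s, hs, rfl⟩
    have h1 : toZ r (γ₀ + s) ∈ groupOf r Γ :=
      AddSubgroup.subset_closure ⟨_, hIdeal γ₀ hγ₀ s hs, rfl⟩
    have h2 : toZ r γ₀ ∈ groupOf r Γ := AddSubgroup.subset_closure ⟨_, hγ₀, rfl⟩
    have h3 := AddSubgroup.sub_mem _ h1 h2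
    rwa [Stmt16Aux.toZ_add, add_sub_cancel_left] at h3
  have hL : spanOf r Γ = spanOf r S := by
    refine le_antisymm (Submodule.span_mono (Set.image_mono hΓS)) ?_
    rw [spanOf, Submodule.span_le]
    rintro _ ⟨s, hs, rfl⟩
    have h1 : latticeEmb r (toZ r (γ₀ + s)) ∈ spanOf r Γ :=
      Submodule.subset_span ⟨_, hIdeal γ₀ hγ₀ s hs, rfl⟩
    have h2 : latticeEmb r (toZ r γ₀) ∈ spanOf r Γ := Submodule.subset_span ⟨_, hγ₀, rfl⟩
    have h3 := Submodule.sub_mem _ h1 h2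
    rwa [Stmt16Aux.toZ_add, map_add, add_sub_cancel_left] at h3
  have hC : coneOf r Γ = coneOf r S := by
    have easy : coneOf r Γ ⊆ coneOf r S := by
      unfold NOSemigroup.coneOf NOSemigroup.conGen
      apply closure_mono
      rintro x ⟨n, c, v, hc, hv, rfl⟩
      exact ⟨n, c, v, hc, fun i => Set.image_mono hΓS (hv i), rfl⟩
    have hard : coneOf r S ⊆ coneOf r Γ := by
      have hclosed : IsClosed (coneOf r Γ) := isClosed_closure
      refine closure_minimal ?_ hclosed
      rintro x ⟨n, c, v, hc, hv, rfl⟩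
      choose s hsS hsv using hv
      have hsv' : ∀ i, latticeEmb r (NOSemigroup.toZ r (s i)) = v i := fun i => hsv i
      set g : E r := Stmt16Aux.embHom r γ₀ with hg
      have key : ∀ N : ℕ, 0 < N →
          (∑ i, c i • v i) + ((∑ i, c i) / N) • g ∈
            {x : E r | ∃ (m : ℕ) (d : Fin m → ℝ) (w : Fin m → E r),
              (∀ i, 0 ≤ d i) ∧ (∀ i, w i ∈ embSet r Γ) ∧ x = ∑ i, d i • w i} := by
        intro N hN
        refine ⟨n, fun i => c i / N, fun i => Stmt16Aux.embHom r (γ₀ + N • s i), ?_, ?_, ?_⟩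
        · intro i; exact div_nonneg (hc i) (Nat.cast_nonneg N)
        · intro i
          exact ⟨_, hIdeal γ₀ hγ₀ _ (Stmt16Aux.nsmul_mem_semigroup hS (hsS i) N hN), rfl⟩
        · have hN0 : (N : ℝ) ≠ 0 := Nat.cast_ne_zero.mpr hN.ne'
          have hterm : ∀ i : Fin n, (c i / N) • (Stmt16Aux.embHom r (γ₀ + N • s i))
              = (c i / N) • g + c i • v i := by
            intro i
            rw [map_add, map_nsmul, smul_add]
            congr 1
            rw [← Nat.cast_smul_eq_nsmul ℝ, smul_smul, div_mul_cancel₀ _ hN0, Stmt16Aux.embHom_apply, hsv']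
          rw [Finset.sum_congr rfl (fun i _ => hterm i), Finset.sum_add_distrib,
            ← Finset.sum_smul, ← Finset.sum_div]
          exact add_comm _ _
      have htend : Filter.Tendsto
          (fun N : ℕ => (∑ i, c i • v i) + ((∑ i, c i) / N) • g) Filter.atTop
          (nhds (∑ i, c i • v i)) := by
        have h1 : Filter.Tendsto (fun N : ℕ => (∑ i, c i) / (N : ℝ)) Filter.atTop (nhds 0) := by
          simpa [div_eq_mul_inv] using
            ((tendsto_inv_atTop_nhds_zero_nat (𝕜 := ℝ)).const_mul (∑ i, c i))
        have h2 := h1.smul_const g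
        simpa using tendsto_const_nhds.add h2
      show (∑ i, c i • v i) ∈ coneOf r Γ
      unfold NOSemigroup.coneOf NOSemigroup.conGen
      refine mem_closure_of_tendsto htend ?_
      filter_upwards [Filter.eventually_gt_atTop 0] with N hN using key N hN
    exact Set.Subset.antisymm easy hard
  have hm : mIndex r Γ = mIndex r S := by unfold mIndex; rw [hG]
  have hb : boundaryLattice r Γ = boundaryLattice r S := by
    have hmem : ∀ (T : Set ((Fin r → ℤ) × ℕ)) (z : Z r),
        z ∈ boundaryLattice r T ↔ latticeEmb r z ∈ spanOf r T ∧ z.2 = 0 := fun T z => Iff.rfl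
    ext z
    rw [hmem, hmem, hL]
  have hi : indIndex r Γ = indIndex r S := by unfold indIndex; rw [hG, hb]
  exact ⟨by unfold okBody; rw [hC, hm], hi, hm⟩
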